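/- arXiv:1709.00586 — 7 statements merged into one kernel-verified Lean document; each statement's English description precedes it below -/
import Mathlib

section
/- For all real numbers x, y, z with 0 < z ≤ y ≤ x, the quantity M(x,y,z) = y^(z−x) · z^(x−y) · x^(y−z) satisfies M(x,y,z) ≤ 1. -/
theorem M_le_one (x y z : ℝ) (hz : 0 < z) (hzy : z ≤ y) (hyx : y ≤ x) :
    y ^ (z - x) * z ^ (x - y) * x ^ (y - z) ≤ 1 := by
  have hy : 0 < y := hz.trans_le hzy
  have hx : 0 < x := hy.trans_le hyx
  rw [Real.rpow_def_of_pos hy, Real.rpow_def_of_pos hz, Real.rpow_def_of_pos hx,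
    ← Real.exp_add, ← Real.exp_add, Real.exp_le_one_iff]
  have h1 : Real.log (x / y) ≤ x / y - 1 := Real.log_le_sub_one_of_pos (by positivity)
  have h2 : Real.log (z / y) ≤ z / y - 1 := Real.log_le_sub_one_of_pos (by positivity)
  rw [Real.log_div hx.ne' hy.ne'] at h1
  rw [Real.log_div hz.ne' hy.ne'] at h2
  have hA : Real.log y ≤ Real.log x := Real.log_le_log hy hyx
  have hB : Real.log z ≤ Real.log y := Real.log_le_log hz hzy
  have e1 : y * (Real.log x - Real.log y) ≤ x - y := by
    have := mul_le_mul_of_nonneg_left h1 hy.le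
    field_simp at this ⊢
    nlinarith
  have e2 : y - z ≤ y * (Real.log y - Real.log z) := by
    have := mul_le_mul_of_nonneg_left h2 hy.le
    field_simp at this ⊢
    nlinarith
  nlinarith [mul_le_mul_of_nonneg_left e1 (sub_nonneg.2 hzy),
    mul_le_mul_of_nonneg_left e2 (sub_nonneg.2 hyx),
    mul_nonneg (sub_nonneg.2 hzy) (sub_nonneg.2 hA),
    mul_nonneg (sub_nonneg.2 hyx) (sub_nonneg.2 hB)]
end

section
/- For real numbers x, y, z with 0 < z < y < x, the quantity M(x,y,z) = y^(z−x) · z^(x−y) · x^(y−z) satisfies M(x,y,z) < 1 (strict inequality in the interior of the domain). -/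
theorem M_lt_one (x y z : ℝ) (hz : 0 < z) (hzy : z < y) (hyx : y < x) :
    y ^ (z - x) * z ^ (x - y) * x ^ (y - z) < 1 := by
  have hy : 0 < y := hz.trans hzy
  have hx : 0 < x := hy.trans hyx
  rw [Real.rpow_def_of_pos hy, Real.rpow_def_of_pos hz, Real.rpow_def_of_pos hx,
    ← Real.exp_add, ← Real.exp_add, show (1:ℝ) = Real.exp 0 by simp]
  rw [Real.exp_lt_exp]
  have h1 : Real.log (x / y) < x / y - 1 :=
    Real.log_lt_sub_one_of_pos (by positivity) (by
      intro h
      have : x = y := by field_simp at h; linarith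
      linarith)
  have h2 : Real.log (z / y) < z / y - 1 :=
    Real.log_lt_sub_one_of_pos (by positivity) (by
      intro h
      have : z = y := by field_simp at h; linarith
      linarith)
  rw [Real.log_div (by positivity) (by positivity)] at h1 h2
  have h1' : y * (Real.log x - Real.log y) < x - y := by
    have e : y * (x / y - 1) = x - y := by field_simp
    nlinarith [mul_lt_mul_of_pos_left h1 hy]
  have h2' : y * (Real.log z - Real.log y) < z - y := by
    have e : y * (z / y - 1) = z - y := by field_simp
    nlinarith [mul_lt_mul_of_pos_left h2 hy]
  nlinarith [mul_lt_mul_of_pos_left h1' (sub_pos.mpr hzy),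
    mul_lt_mul_of_pos_left h2' (sub_pos.mpr hyx), sub_pos.mpr hzy, sub_pos.mpr hyx]
end

section
/- For real numbers x, y, z with 0 < z ≤ y ≤ x, M(x,y,z) = y^(z−x) · z^(x−y) · x^(y−z) equals 1 if and only if x = y or y = z. -/
theorem M_eq_one_iff (x y z : ℝ) (hz : 0 < z) (hzy : z ≤ y) (hyx : y ≤ x) :
    y ^ (z - x) * z ^ (x - y) * x ^ (y - z) = 1 ↔ x = y ∨ y = z := by
  have hy : 0 < y := lt_of_lt_of_le hz hzy
  have hx : 0 < x := lt_of_lt_of_le hy hyx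
  constructor
  · intro h
    by_contra hc
    push_neg at hc
    obtain ⟨hxy, hyz⟩ := hc
    have hyx' : y < x := lt_of_le_of_ne hyx (Ne.symm hxy)
    have hzy' : z < y := lt_of_le_of_ne hzy (Ne.symm hyz)
    have hlog : Real.log (y ^ (z - x) * z ^ (x - y) * x ^ (y - z)) =
        (z - x) * Real.log y + (x - y) * Real.log z + (y - z) * Real.log x := by
      rw [Real.log_mul (by positivity) (by positivity),
          Real.log_mul (by positivity) (by positivity),
          Real.log_rpow hy, Real.log_rpow hz, Real.log_rpow hx]
    have hS : (z - x) * Real.log y + (x - y) * Real.log z + (y - z) * Real.log x = 0 := by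
      rw [← hlog, h, Real.log_one]
    have h1 : y * (Real.log x - Real.log y) < x - y := by
      have hne : x / y ≠ 1 := by
        intro h1
        rw [div_eq_one_iff_eq hy.ne'] at h1
        exact hxy h1
      have hlt := Real.log_lt_sub_one_of_pos (div_pos hx hy) hne
      rw [Real.log_div hx.ne' hy.ne'] at hlt
      calc y * (Real.log x - Real.log y) < y * (x / y - 1) :=
            mul_lt_mul_of_pos_left hlt hy
        _ = x - y := by field_simp
    have h2 : y * (Real.log z - Real.log y) < z - y := by
      have hne : z / y ≠ 1 := by
        intro h1
        rw [div_eq_one_iff_eq hy.ne'] at h1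
        exact (ne_of_lt hzy') h1
      have hlt := Real.log_lt_sub_one_of_pos (div_pos hz hy) hne
      rw [Real.log_div hz.ne' hy.ne'] at hlt
      calc y * (Real.log z - Real.log y) < y * (z / y - 1) :=
            mul_lt_mul_of_pos_left hlt hy
        _ = z - y := by field_simp
    have hA : (x - y) * (y * (Real.log z - Real.log y)) < (x - y) * (z - y) :=
      mul_lt_mul_of_pos_left h2 (by linarith)
    have hB : (y - z) * (y * (Real.log x - Real.log y)) < (y - z) * (x - y) :=
      mul_lt_mul_of_pos_left h1 (by linarith)
    have hS' : y * ((z - x) * Real.log y + (x - y) * Real.log z + (y - z) * Real.log x) = 0 := by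
      rw [hS, mul_zero]
    nlinarith [hA, hB, hS']
  · rintro (h | h)
    · subst h
      rw [sub_self, Real.rpow_zero, mul_one, ← Real.rpow_add hx,
        show z - x + (x - z) = 0 by ring, Real.rpow_zero]
    · subst h
      rw [sub_self, Real.rpow_zero, mul_one, ← Real.rpow_add hy,
        show y - x + (x - y) = 0 by ring, Real.rpow_zero]
end

section
/- For 0 < b < 1 and 1 < a < 1/b, the function H(a,b) = a(1−b)·ln(a) + (a−1)·ln(b) is strictly negative. -/
theorem H_neg (a b : ℝ) (hb0 : 0 < b) (hb1 : b < 1) (ha1 : 1 < a) (hab : a < 1 / b) :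
    a * (1 - b) * Real.log a + (a - 1) * Real.log b < 0 := by
  have hb1' : (1:ℝ) < 1 / b := (one_lt_div hb0).2 hb1
  set t : ℝ := (1 / b - a) / (1 / b - 1) with ht_def
  set s : ℝ := (a - 1) / (1 / b - 1) with hs_def
  have hd : 0 < 1 / b - 1 := by linarith
  have hbne : b ≠ 0 := hb0.ne'
  have ht : 0 < t := div_pos (by linarith) hd
  have hs : 0 < s := div_pos (by linarith) hd
  have hts : t + s = 1 := by
    rw [ht_def, hs_def, ← add_div, show 1 / b - a + (a - 1) = 1 / b - 1 by ring]
    exact div_self hd.ne'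
  have hcomb : t • (1:ℝ) + s • (1 / b) = a := by
    rw [smul_eq_mul, smul_eq_mul, ht_def, hs_def, div_mul_eq_mul_div, div_mul_eq_mul_div,
      ← add_div, div_eq_iff hd.ne']
    field_simp
    ring
  have key := Real.strictConvexOn_mul_log.2 (Set.mem_Ici.2 (by norm_num : (0:ℝ) ≤ 1))
    (Set.mem_Ici.2 (by positivity : (0:ℝ) ≤ 1 / b)) (by linarith : (1:ℝ) ≠ 1 / b)
    ht hs hts
  rw [hcomb] at key
  have hloginv : Real.log (1 / b) = -Real.log b := by
    rw [one_div, Real.log_inv]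
  simp only [smul_eq_mul, Real.log_one, hloginv] at key
  have hsb : s * (1 / b) = (a - 1) / (1 - b) := by
    have hbb : b * (1 / b - 1) = 1 - b := by field_simp
    rw [hs_def, div_mul_eq_mul_div, mul_one_div, div_div, hbb]
  have key2 : a * Real.log a < (a - 1) / (1 - b) * (-Real.log b) := by
    calc a * Real.log a < t * (1 * 0) + s * (1 / b * -Real.log b) := key
    _ = s * (1 / b) * (-Real.log b) := by ring
    _ = (a - 1) / (1 - b) * (-Real.log b) := by rw [hsb]
  have hb1'' : 0 < 1 - b := by linarith
  have h3 := mul_lt_mul_of_pos_left key2 hb1''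
  have h4 : (1 - b) * ((a - 1) / (1 - b) * (-Real.log b)) = (a - 1) * (-Real.log b) := by
    field_simp
  rw [h4] at h3
  nlinarith [h3]
end

section
/- Let a, b, c > 0 and 2 < p < q < r with p < 6. Define g(t) = 1 + (b(q−2)(6−q))/(a(p−2)(6−p))·t − (c(r−2)(6−r))/(a(p−2)(6−p))·t^((r−p)/(q−p)) and h(t) = 1 + (b(q−2))/(a(p−2))·t − (c(r−2))/(a(p−2))·t^((r−p)/(q−p)). If t₀ > 0 satisfies h(t₀) = 0, then g(t₀) = (b(q−2)(r−q))/(a(p−2)(6−p))·t₀ + 1 − (6−r)/(6−p) > 0. -/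
theorem g_pos_at_zero_of_h (a b c p q r : ℝ) (ha : 0 < a) (hb : 0 < b) (hc : 0 < c)
    (hp : 2 < p) (hpq : p < q) (hqr : q < r) (hp6 : p < 6)
    (g h : ℝ → ℝ)
    (hg : ∀ t : ℝ, g t = 1 + b * (q - 2) * (6 - q) / (a * (p - 2) * (6 - p)) * t
        - c * (r - 2) * (6 - r) / (a * (p - 2) * (6 - p)) * t ^ ((r - p) / (q - p)))
    (hh : ∀ t : ℝ, h t = 1 + b * (q - 2) / (a * (p - 2)) * t
        - c * (r - 2) / (a * (p - 2)) * t ^ ((r - p) / (q - p)))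
    (t₀ : ℝ) (ht₀ : 0 < t₀) (hzero : h t₀ = 0) :
    g t₀ = b * (q - 2) * (r - q) / (a * (p - 2) * (6 - p)) * t₀ + 1 - (6 - r) / (6 - p) ∧
    0 < g t₀ := by
  have h2 : (0:ℝ) < p - 2 := by linarith
  have h6 : (0:ℝ) < 6 - p := by linarith
  have hz := hzero
  rw [hh] at hz
  have key : c * (r - 2) / (a * (p - 2)) * t₀ ^ ((r - p) / (q - p))
      = 1 + b * (q - 2) / (a * (p - 2)) * t₀ := by linarith
  have heq : g t₀ = b * (q - 2) * (r - q) / (a * (p - 2) * (6 - p)) * t₀ + 1 - (6 - r) / (6 - p) := by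
    have hane : a * (p - 2) ≠ 0 := (mul_pos ha h2).ne'
    have key2 : c * (r - 2) * t₀ ^ ((r - p) / (q - p)) = a * (p - 2) + b * (q - 2) * t₀ := by
      field_simp at key
      linarith
    rw [hg]
    field_simp
    linear_combination (-(6 - r)) * key2
  refine ⟨heq, ?_⟩
  rw [heq]
  have h1 : 0 < b * (q - 2) * (r - q) / (a * (p - 2) * (6 - p)) * t₀ := by
    apply mul_pos _ ht₀
    apply div_pos
    · apply mul_pos (mul_pos hb (by linarith)) (by linarith)
    · exact mul_pos (mul_pos ha h2) h6
  have h3 : (6 - r) / (6 - p) < 1 := by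
    rw [div_lt_one h6]; linarith
  linarith
end

section
/- Let a, b, c > 0 and p > 6 with p < q < r. Define h(t) = 1 − (b(q−2))/(a(p−2))·t + (c(r−2))/(a(p−2))·t^((r−p)/(q−p)) and g(t) = 1 − (b(q−2)(6−q))/(a(p−2)(6−p))·t + (c(r−2)(6−r))/(a(p−2)(6−p))·t^((r−p)/(q−p)). If t₁ > 0 satisfies h(t₁) = 0 and h'(t₁) < 0, then t₁ < (a(p−2)(r−p))/(b(q−2)(r−q)) and g(t₁) < 0. -/
theorem t1_bound_and_g_neg (a b c p q r : ℝ) (ha : 0 < a) (hb : 0 < b) (hc : 0 < c)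
    (hp6 : 6 < p) (hpq : p < q) (hqr : q < r)
    (g h : ℝ → ℝ)
    (hh : ∀ t : ℝ, h t = 1 - b * (q - 2) / (a * (p - 2)) * t
        + c * (r - 2) / (a * (p - 2)) * t ^ ((r - p) / (q - p)))
    (hg : ∀ t : ℝ, g t = 1 - b * (q - 2) * (6 - q) / (a * (p - 2) * (6 - p)) * t
        + c * (r - 2) * (6 - r) / (a * (p - 2) * (6 - p)) * t ^ ((r - p) / (q - p)))
    (t₁ : ℝ) (ht₁ : 0 < t₁) (hzero : h t₁ = 0) (hderiv : deriv h t₁ < 0) :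
    t₁ < a * (p - 2) * (r - p) / (b * (q - 2) * (r - q)) ∧ g t₁ < 0 := by
  have hp2 : (0:ℝ) < p - 2 := by linarith
  have hA : 0 < a * (p - 2) := by positivity
  have hB : 0 < b * (q - 2) := by nlinarith
  have hC : 0 < c * (r - 2) := by nlinarith
  have hqp : 0 < q - p := by linarith
  have hrq : 0 < r - q := by linarith
  have hrp : 0 < r - p := by linarith
  set μ : ℝ := (r - p) / (q - p) with hμdef
  have hfun : h = fun t : ℝ => 1 - b * (q - 2) / (a * (p - 2)) * t
      + c * (r - 2) / (a * (p - 2)) * t ^ μ := funext hh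
  have hT : 0 < t₁ ^ μ := Real.rpow_pos_of_pos ht₁ μ
  -- derivative of h at t₁
  have hD : HasDerivAt h (-(b * (q - 2) / (a * (p - 2)) * 1)
      + c * (r - 2) / (a * (p - 2)) * (μ * t₁ ^ (μ - 1))) t₁ := by
    rw [hfun]
    exact (((hasDerivAt_id t₁).const_mul _).const_sub 1).add
      ((Real.hasDerivAt_rpow_const (Or.inl (ne_of_gt ht₁))).const_mul _)
  have hderiv' : -(b * (q - 2) / (a * (p - 2)) * 1)
      + c * (r - 2) / (a * (p - 2)) * (μ * t₁ ^ (μ - 1)) < 0 := by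
    rw [← hD.deriv]; exact hderiv
  have hpow : t₁ ^ (μ - 1) = t₁ ^ μ / t₁ := by
    rw [Real.rpow_sub ht₁, Real.rpow_one]
  rw [hpow] at hderiv'
  -- clear denominators: key facts about T := t₁ ^ μ
  have heq : a * (p - 2) - b * (q - 2) * t₁ + c * (r - 2) * t₁ ^ μ = 0 := by
    have h0 := hzero
    rw [hh] at h0
    field_simp at h0
    linarith
  have hineq : c * (r - 2) * μ * t₁ ^ μ < b * (q - 2) * t₁ := by
    have h1 : (-(b * (q - 2) / (a * (p - 2)) * 1)
        + c * (r - 2) / (a * (p - 2)) * (μ * (t₁ ^ μ / t₁))) * (a * (p - 2) * t₁) < 0 :=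
      mul_neg_of_neg_of_pos hderiv' (by positivity)
    have hA' : a * (p - 2) ≠ 0 := ne_of_gt hA
    have ht' : t₁ ≠ 0 := ne_of_gt ht₁
    have hexp : (-(b * (q - 2) / (a * (p - 2)) * 1)
        + c * (r - 2) / (a * (p - 2)) * (μ * (t₁ ^ μ / t₁))) * (a * (p - 2) * t₁)
        = -(b * (q - 2) * t₁) + c * (r - 2) * μ * t₁ ^ μ := by
      field_simp
    rw [hexp] at h1
    linarith
  -- key inequality
  have hkey : b * (q - 2) * (r - q) * t₁ < a * (p - 2) * (r - p) := by
    have hμval : μ * (q - p) = r - p := by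
      rw [hμdef]; field_simp
    have hCT : c * (r - 2) * t₁ ^ μ = b * (q - 2) * t₁ - a * (p - 2) := by linarith
    -- μ * (B t₁ - A) < B t₁ ; multiply by (q - p)
    have h2 : μ * (b * (q - 2) * t₁ - a * (p - 2)) < b * (q - 2) * t₁ := by
      nlinarith [hineq, hCT]
    have h3 : (μ * (b * (q - 2) * t₁ - a * (p - 2))) * (q - p)
        < (b * (q - 2) * t₁) * (q - p) := mul_lt_mul_of_pos_right h2 hqp
    have h4 : (r - p) * (b * (q - 2) * t₁ - a * (p - 2)) < b * (q - 2) * t₁ * (q - p) := by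
      calc (r - p) * (b * (q - 2) * t₁ - a * (p - 2))
          = (μ * (q - p)) * (b * (q - 2) * t₁ - a * (p - 2)) := by rw [hμval]
        _ = (μ * (b * (q - 2) * t₁ - a * (p - 2))) * (q - p) := by ring
        _ < b * (q - 2) * t₁ * (q - p) := h3
    nlinarith [h4]
  constructor
  · rw [lt_div_iff₀ (by positivity)]
    nlinarith [hkey]
  · have hDneg : a * (p - 2) * (6 - p) < 0 :=
      mul_neg_of_pos_of_neg hA (by linarith)
    have hmul : g t₁ * (a * (p - 2) * (6 - p)) =
        a * (p - 2) * (6 - p) - b * (q - 2) * (6 - q) * t₁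
        + c * (r - 2) * (6 - r) * t₁ ^ μ := by
      have hD0 : a * (p - 2) * (6 - p) ≠ 0 := ne_of_lt hDneg
      have h6 : (6 - p) ≠ 0 := by linarith
      rw [hg]
      field_simp
    have hCT : c * (r - 2) * t₁ ^ μ = b * (q - 2) * t₁ - a * (p - 2) := by linarith
    by_contra hcon
    push_neg at hcon
    have hle : g t₁ * (a * (p - 2) * (6 - p)) ≤ 0 :=
      mul_nonpos_of_nonneg_of_nonpos hcon (le_of_lt hDneg)
    have h5 : c * (r - 2) * (6 - r) * t₁ ^ μ = (6 - r) * (b * (q - 2) * t₁ - a * (p - 2)) := by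
      linear_combination (6 - r) * hCT
    linarith [hmul, hkey, hle, h5]
end

section
/- Let 2 < p < q < r < 6. Then (6−p) < (6−q)^((r−p)/(r−q)) · (6−r)^((p−q)/(r−q)). -/
open Real

lemma gm_lt_am {a b t : ℝ} (ha : 0 < a) (hb : 0 < b) (hab : a ≠ b) (h0 : 0 < t) (h1 : t < 1) :
    a ^ t * b ^ (1 - t) < t * a + (1 - t) * b := by
  have hlog : Real.log a ≠ Real.log b := by
    intro h
    exact hab (by rw [← Real.exp_log ha, h, Real.exp_log hb])
  have key := strictConvexOn_exp.2 (Set.mem_univ (Real.log a)) (Set.mem_univ (Real.log b))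
    hlog h0 (sub_pos.2 h1) (by ring)
  simp only [smul_eq_mul, Real.exp_log ha, Real.exp_log hb] at key
  calc a ^ t * b ^ (1 - t)
      = Real.exp (t * Real.log a + (1 - t) * Real.log b) := by
        rw [Real.exp_add, Real.rpow_def_of_pos ha, Real.rpow_def_of_pos hb,
          mul_comm t, mul_comm (1 - t)]
    _ < t * a + (1 - t) * b := key

theorem weighted_gm_ineq_six (p q r : ℝ) (hp : 2 < p) (hpq : p < q) (hqr : q < r) (hr6 : r < 6) :
    6 - p < (6 - q) ^ ((r - p) / (r - q)) * (6 - r) ^ ((p - q) / (r - q)) := by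
  set x := 6 - p with hxdef
  set y := 6 - q with hydef
  set z := 6 - r with hzdef
  have hz : 0 < z := by simp [hzdef]; linarith
  have hzy : z < y := by simp [hydef, hzdef]; linarith
  have hyx : y < x := by simp [hxdef, hydef]; linarith
  have hy : 0 < y := hz.trans hzy
  have hx : 0 < x := hy.trans hyx
  set t : ℝ := (y - z) / (x - z) with htdef
  have hxz : 0 < x - z := by linarith
  have ht0 : 0 < t := div_pos (by linarith) hxz
  have ht1 : t < 1 := (div_lt_one hxz).2 (by linarith)
  set α : ℝ := (x - z) / (y - z) with hαdef
  have hyz : 0 < y - z := by linarith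
  have hα1 : 1 < α := (one_lt_div hyz).2 (by linarith)
  have hα0 : 0 < α := by linarith
  have htα : t * α = 1 := by
    rw [htdef, hαdef, div_mul_div_comm, mul_comm (y - z), div_self (mul_ne_zero hxz.ne' hyz.ne')]
  -- reduce exponents to α and 1 - α
  have hrq : r - q ≠ 0 := by linarith
  have hyz' : (6 - q) - (6 - r) ≠ 0 := by intro h; linarith
  have he1 : (r - p) / (r - q) = α := by
    rw [hαdef, hxdef, hydef, hzdef]; field_simp; ring
  have he2 : (p - q) / (r - q) = 1 - α := by
    rw [hαdef, hxdef, hydef, hzdef]; field_simp; ring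
  rw [he1, he2]
  -- AM-GM
  have key : x ^ t * z ^ (1 - t) < y := by
    have := gm_lt_am hx hz (by linarith) ht0 ht1
    calc x ^ t * z ^ (1 - t) < t * x + (1 - t) * z := this
      _ = y := by rw [htdef]; field_simp; ring
  -- raise to power α
  have key2 : (x ^ t * z ^ (1 - t)) ^ α < y ^ α :=
    Real.rpow_lt_rpow (by positivity) key hα0
  have hLHS : (x ^ t * z ^ (1 - t)) ^ α = x * z ^ (α - 1) := by
    have h2 : (1 - t) * α = α - 1 := by rw [sub_mul, one_mul, htα]
    rw [Real.mul_rpow (by positivity) (by positivity),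
      ← Real.rpow_mul hx.le, ← Real.rpow_mul hz.le, htα, h2, Real.rpow_one]
  rw [hLHS] at key2
  -- conclude
  have hzpow : 0 < z ^ ((1 : ℝ) - α) := Real.rpow_pos_of_pos hz _
  have : x * z ^ (α - 1) * z ^ (1 - α) < y ^ α * z ^ (1 - α) :=
    mul_lt_mul_of_pos_right key2 hzpow
  calc x = x * z ^ (α - 1) * z ^ (1 - α) := by
        rw [mul_assoc, ← Real.rpow_add hz]
        norm_num
    _ < y ^ α * z ^ (1 - α) := this
end
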